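/- The functions J01 = cos φ p_ρ - (sin φ / T_κ(ρ)) p_φ, J02 = sin φ p_ρ + (cos φ / T_κ(ρ)) p_φ, J12 = p_φ satisfy the Poisson brackets {J12, J01} = J02, {J12, J02} = -J01, {J01, J02} = κ J12, where for κ > 0, T_κ(ρ) = tan(√κ ρ)/√κ. -/

import Mathlib

open Real

/-- Canonical Poisson bracket on ℝ⁴ with coordinates (q1, q2, p1, p2). -/
noncomputable def pb (f g : ℝ → ℝ → ℝ → ℝ → ℝ) : ℝ → ℝ → ℝ → ℝ → ℝ :=
  fun q1 q2 p1 p2 =>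
      deriv (fun x => f x q2 p1 p2) q1 * deriv (fun x => g q1 q2 x p2) p1
    + deriv (fun x => f q1 x p1 p2) q2 * deriv (fun x => g q1 q2 p1 x) p2
    - deriv (fun x => f q1 q2 x p2) p1 * deriv (fun x => g x q2 p1 p2) q1
    - deriv (fun x => f q1 q2 p1 x) p2 * deriv (fun x => g q1 x p1 p2) q2

/-- κ-tangent for κ > 0. -/
noncomputable def Tk (κ x : ℝ) : ℝ := Real.tan (Real.sqrt κ * x) / Real.sqrt κ

theorem isometry_generators_brackets (κ : ℝ) (hκ : 0 < κ)
    (J01 J02 J12 : ℝ → ℝ → ℝ → ℝ → ℝ)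
    (hJ01 : J01 = fun ρ φ pρ pφ => Real.cos φ * pρ - (Real.sin φ / Tk κ ρ) * pφ)
    (hJ02 : J02 = fun ρ φ pρ pφ => Real.sin φ * pρ + (Real.cos φ / Tk κ ρ) * pφ)
    (hJ12 : J12 = fun ρ φ pρ pφ => pφ) :
    ∀ ρ φ pρ pφ : ℝ, Tk κ ρ ≠ 0 → Real.cos (Real.sqrt κ * ρ) ≠ 0 →
      pb J12 J01 ρ φ pρ pφ = J02 ρ φ pρ pφ ∧
      pb J12 J02 ρ φ pρ pφ = -J01 ρ φ pρ pφ ∧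
      pb J01 J02 ρ φ pρ pφ = κ * J12 ρ φ pρ pφ := by
  subst hJ01 hJ02 hJ12
  intro ρ φ pρ pφ hT0 hc
  set r := Real.sqrt κ with hr
  have hr0 : r ≠ 0 := by positivity
  have hr2 : r ^ 2 = κ := Real.sq_sqrt hκ.le
  set c := Real.cos (r * ρ) with hcdef
  set s := Real.sin (r * ρ) with hsdef
  have hsc : s ^ 2 + c ^ 2 = 1 := Real.sin_sq_add_cos_sq _
  set T := Tk κ ρ with hTdef
  have hTval : T = s / c / r := by
    rw [hTdef, Tk, Real.tan_eq_sin_div_cos]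
  -- derivative of Tk
  have hTk : HasDerivAt (fun x => Tk κ x) (1 / c ^ 2) ρ := by
    have htan : HasDerivAt Real.tan (1 / c ^ 2) (r * ρ) := Real.hasDerivAt_tan hc
    have hlin : HasDerivAt (fun x : ℝ => r * x) r ρ := by
      simpa using (hasDerivAt_id ρ).const_mul r
    have h := (htan.comp ρ hlin).div_const r
    have h2 : 1 / c ^ 2 * r / r = 1 / c ^ 2 := by
      rw [mul_div_assoc, div_self hr0, mul_one]
    rw [h2] at h
    exact h
  have hinv : HasDerivAt (fun x => (Tk κ x)⁻¹) (-(1 / c ^ 2) / T ^ 2) ρ := hTk.inv hT0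
  -- the four nontrivial ρ / φ / pρ / pφ derivatives for J01
  have d01ρ : deriv (fun x => Real.cos φ * pρ - Real.sin φ / Tk κ x * pφ) ρ
      = -(Real.sin φ * (-(1 / c ^ 2) / T ^ 2) * pφ) := by
    have h : HasDerivAt (fun x => Real.cos φ * pρ - Real.sin φ / Tk κ x * pφ)
        (-(Real.sin φ * (-(1 / c ^ 2) / T ^ 2) * pφ)) ρ := by
      have := (((hinv.const_mul (Real.sin φ)).mul_const pφ).const_sub (Real.cos φ * pρ))
      simpa [div_eq_mul_inv, mul_comm, mul_left_comm, mul_assoc] using this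
    exact h.deriv
  have d01φ : deriv (fun x => Real.cos x * pρ - Real.sin x / T * pφ) φ
      = -Real.sin φ * pρ - Real.cos φ / T * pφ := by
    have h : HasDerivAt (fun x => Real.cos x * pρ - Real.sin x / T * pφ)
        (-Real.sin φ * pρ - Real.cos φ / T * pφ) φ := by
      have := (((Real.hasDerivAt_cos φ).mul_const pρ).sub
        (((Real.hasDerivAt_sin φ).div_const T).mul_const pφ))
      exact this
    exact h.deriv
  have d01pρ : deriv (fun x => Real.cos φ * x - Real.sin φ / T * pφ) pρ = Real.cos φ := by
    have h : HasDerivAt (fun x => Real.cos φ * x - Real.sin φ / T * pφ) (Real.cos φ) pρ := by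
      simpa using (((hasDerivAt_id pρ).const_mul (Real.cos φ)).sub_const (Real.sin φ / T * pφ))
    exact h.deriv
  have d01pφ : deriv (fun x => Real.cos φ * pρ - Real.sin φ / T * x) pφ
      = -(Real.sin φ / T) := by
    have h : HasDerivAt (fun x => Real.cos φ * pρ - Real.sin φ / T * x)
        (-(Real.sin φ / T)) pφ := by
      simpa using (((hasDerivAt_id pφ).const_mul (Real.sin φ / T)).const_sub (Real.cos φ * pρ))
    exact h.deriv
  -- same for J02
  have d02ρ : deriv (fun x => Real.sin φ * pρ + Real.cos φ / Tk κ x * pφ) ρ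
      = Real.cos φ * (-(1 / c ^ 2) / T ^ 2) * pφ := by
    have h : HasDerivAt (fun x => Real.sin φ * pρ + Real.cos φ / Tk κ x * pφ)
        (Real.cos φ * (-(1 / c ^ 2) / T ^ 2) * pφ) ρ := by
      have := (((hinv.const_mul (Real.cos φ)).mul_const pφ).const_add (Real.sin φ * pρ))
      simpa [div_eq_mul_inv, mul_comm, mul_left_comm, mul_assoc] using this
    exact h.deriv
  have d02φ : deriv (fun x => Real.sin x * pρ + Real.cos x / T * pφ) φ
      = Real.cos φ * pρ + -Real.sin φ / T * pφ := by
    have h : HasDerivAt (fun x => Real.sin x * pρ + Real.cos x / T * pφ)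
        (Real.cos φ * pρ + -Real.sin φ / T * pφ) φ := by
      have := (((Real.hasDerivAt_sin φ).mul_const pρ).add
        (((Real.hasDerivAt_cos φ).div_const T).mul_const pφ))
      exact this
    exact h.deriv
  have d02pρ : deriv (fun x => Real.sin φ * x + Real.cos φ / T * pφ) pρ = Real.sin φ := by
    have h : HasDerivAt (fun x => Real.sin φ * x + Real.cos φ / T * pφ) (Real.sin φ) pρ := by
      simpa using (((hasDerivAt_id pρ).const_mul (Real.sin φ)).add_const (Real.cos φ / T * pφ))
    exact h.deriv
  have d02pφ : deriv (fun x => Real.sin φ * pρ + Real.cos φ / T * x) pφ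
      = Real.cos φ / T := by
    have h : HasDerivAt (fun x => Real.sin φ * pρ + Real.cos φ / T * x)
        (Real.cos φ / T) pφ := by
      simpa using (((hasDerivAt_id pφ).const_mul (Real.cos φ / T)).const_add (Real.sin φ * pρ))
    exact h.deriv
  have hc0 : c ≠ 0 := hc
  have hs0 : s ≠ 0 := by
    intro h
    apply hT0
    rw [hTval, h]
    simp
  refine ⟨?_, ?_, ?_⟩
  · simp only [pb, ← hTdef, deriv_const, d01φ, d01ρ, d01pρ, d01pφ, deriv_id'']
    ring
  · simp only [pb, ← hTdef, deriv_const, d02φ, d02ρ, d02pρ, d02pφ, deriv_id'']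
    ring
  · simp only [pb, ← hTdef, d01φ, d01ρ, d01pρ, d01pφ, d02φ, d02ρ, d02pρ, d02pφ]
    have hT0' : T ≠ 0 := hT0
    have key : 1 / c ^ 2 = κ * T ^ 2 + 1 := by
      rw [hTval, ← hr2]
      field_simp
      linear_combination (-1 : ℝ) * hsc
    have hpyth : Real.sin φ ^ 2 + Real.cos φ ^ 2 = 1 := Real.sin_sq_add_cos_sq φ
    rw [key]
    have h2 : κ * T ^ 2 + 1 ≠ 0 := by rw [← key]; positivity
    field_simp
    ring_nf
    linear_combination (κ * T ^ 2 * pφ) * hpyth
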